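/- Let P be a set and ◁ a transitive antisymmetric relation on P, and let M(P,◁) be the quotient of the free commutative monoid on P by the smallest monoid congruence identifying p with p + q whenever q ◁ p. Then M(P,◁) is a primitive monoid (that is, a conical, antisymmetric, primely generated refinement monoid), the canonical map P → M(P,◁) is injective, the prime elements of M(P,◁) are exactly the classes of the elements of P, and for p, q ∈ P one has [p] + [q] = [p] if and only if q ◁ p. -/

import Mathlib

set_option linter.unusedSectionVars false


/-- The algebraic preorder on a commutative monoid: `x ≤ y` iff `∃ z, y = x + z`. -/
def AlgLE {M : Type*} [AddCommMonoid M] (x y : M) : Prop := ∃ z, y = x + z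

/-- A monoid is conical if `x + y = 0` implies `x = 0` and `y = 0`. -/
def IsConical (M : Type*) [AddCommMonoid M] : Prop := ∀ x y : M, x + y = 0 → x = 0 ∧ y = 0

/-- A refinement monoid: every equality `a + b = c + d` admits a refinement. -/
def IsRefinement (M : Type*) [AddCommMonoid M] : Prop :=
  ∀ a b c d : M, a + b = c + d →
    ∃ x y z w : M, a = x + y ∧ b = z + w ∧ c = x + z ∧ d = y + w

/-- Separative: `a + a = a + b` and `b + b = a + b` imply `a = b`. -/
def IsSeparative (M : Type*) [AddCommMonoid M] : Prop :=
  ∀ a b : M, a + a = a + b → b + b = a + b → a = b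

/-- A prime element: `p ≠ 0` and `p ≤ a + b` implies `p ≤ a` or `p ≤ b`
(algebraic preorder). -/
def IsPrimeElem {M : Type*} [AddCommMonoid M] (p : M) : Prop :=
  p ≠ 0 ∧ ∀ a b : M, AlgLE p (a + b) → AlgLE p a ∨ AlgLE p b

/-- Primely generated: every element is a finite sum of prime elements. -/
def PrimelyGenerated (M : Type*) [AddCommMonoid M] : Prop :=
  ∀ x : M, ∃ l : Multiset M, (∀ p ∈ l, IsPrimeElem p) ∧ x = l.sum

/-- Antisymmetric: the algebraic preorder is a partial order. -/
def IsAntisymmetric (M : Type*) [AddCommMonoid M] : Prop :=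
  ∀ x y : M, AlgLE x y → AlgLE y x → x = y

/-- A primitive monoid: an antisymmetric, primely generated refinement monoid. -/
def IsPrimitive (M : Type*) [AddCommMonoid M] : Prop :=
  IsAntisymmetric M ∧ PrimelyGenerated M ∧ IsRefinement M

/-- The defining relations of `M(P, ◁)`: `p = p + q` whenever `q ◁ p`.
(The free commutative monoid on `P` is `Multiset P`.) -/
def primRel (P : Type) (lt : P → P → Prop) : Multiset P → Multiset P → Prop :=
  fun x y => ∃ p q : P, lt q p ∧ x = ({p} : Multiset P) ∧
    y = ({p} : Multiset P) + ({q} : Multiset P)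

/-- The monoid `M(P, ◁)`: quotient of the free commutative monoid on `P` by the
smallest monoid congruence identifying `p` with `p + q` whenever `q ◁ p`. -/
abbrev PrimMonoid (P : Type) (lt : P → P → Prop) := (addConGen (primRel P lt)).Quotient


open Multiset

namespace Prim7

attribute [local instance] Classical.propDecidable

variable {P : Type} {lt : P → P → Prop}

def Absb (lt : P → P → Prop) (s : Multiset P) (p : P) : Prop := ∃ p' ∈ s, p' ≠ p ∧ lt p p'

noncomputable def NF (lt : P → P → Prop) (s : Multiset P) : Multiset P :=
  s.filter (fun p => ¬ Absb lt s p ∧ ¬ lt p p)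
  + (s.filter (fun p => ¬ Absb lt s p ∧ lt p p)).dedup

lemma count_NF (s : Multiset P) (p : P) : count p (NF lt s) =
    if Absb lt s p then 0 else if lt p p then (if p ∈ s then 1 else 0) else count p s := by
  simp only [NF, count_add, count_filter, count_dedup, mem_filter]
  split_ifs <;> simp_all

lemma NF_le (s : Multiset P) : NF lt s ≤ s := by
  rw [le_iff_count]
  intro p
  rw [count_NF]
  split_ifs with h1 h2 h3
  · omega
  · exact count_pos.2 h3
  · omega
  · omega

lemma mem_NF {s : Multiset P} {p : P} : p ∈ NF lt s ↔ p ∈ s ∧ ¬ Absb lt s p := by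
  rw [← count_pos, count_NF]
  split_ifs with h1 h2 h3 <;> simp_all [count_pos]

variable (htrans : ∀ a b c : P, lt a b → lt b c → lt a c)
variable (hanti : ∀ a b : P, lt a b → lt b a → a = b)

section Chain
include htrans hanti

lemma chain_aux : ∀ (n : ℕ) (p : P) (s : Multiset P), p ∈ s →
    (s.toFinset.filter (fun r => lt p r ∧ r ≠ p)).card ≤ n →
    ∃ q ∈ NF lt s, p = q ∨ lt p q := by
  intro n
  induction n with
  | zero =>
    intro p s hp hc
    refine ⟨p, mem_NF.2 ⟨hp, ?_⟩, Or.inl rfl⟩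
    rintro ⟨p', hp', hne, hlt⟩
    have : p' ∈ s.toFinset.filter (fun r => lt p r ∧ r ≠ p) := by
      simp [mem_toFinset.2 hp', hlt, hne]
    simp [Finset.card_eq_zero.1 (Nat.le_zero.1 hc)] at this
  | succ n ih =>
    intro p s hp hc
    by_cases ha : Absb lt s p
    · obtain ⟨p', hp', hne, hlt⟩ := ha
      have hsub : s.toFinset.filter (fun r => lt p' r ∧ r ≠ p') ⊆
          s.toFinset.filter (fun r => lt p r ∧ r ≠ p) := by
        intro r hr
        simp only [Finset.mem_filter] at hr ⊢
        refine ⟨hr.1, htrans _ _ _ hlt hr.2.1, ?_⟩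
        rintro rfl
        exact hne (hanti _ _ hlt hr.2.1).symm
      have hmem : p' ∈ s.toFinset.filter (fun r => lt p r ∧ r ≠ p) := by
        simp [mem_toFinset.2 hp', hlt, hne]
      have hnotmem : p' ∉ s.toFinset.filter (fun r => lt p' r ∧ r ≠ p') := by simp
      have hlt' : (s.toFinset.filter (fun r => lt p' r ∧ r ≠ p')).card <
          (s.toFinset.filter (fun r => lt p r ∧ r ≠ p)).card :=
        Finset.card_lt_card ((Finset.ssubset_iff_of_subset hsub).2 ⟨p', hmem, hnotmem⟩)
      obtain ⟨q, hq, hpq⟩ := ih p' s hp' (by omega)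
      refine ⟨q, hq, Or.inr ?_⟩
      rcases hpq with rfl | h
      · exact hlt
      · exact htrans _ _ _ hlt h
    · exact ⟨p, mem_NF.2 ⟨hp, ha⟩, Or.inl rfl⟩

lemma exists_NF_above {s : Multiset P} {p : P} (hp : p ∈ s) :
    ∃ q ∈ NF lt s, p = q ∨ lt p q :=
  chain_aux htrans hanti _ p s hp le_rfl

lemma Absb_NF_add {u w : Multiset P} {p : P} :
    Absb lt (NF lt u + w) p ↔ Absb lt (u + w) p := by
  constructor
  · rintro ⟨p', hp', hne, hlt⟩
    exact ⟨p', mem_add.2 ((mem_add.1 hp').imp (fun h => mem_of_le (NF_le u) h) id), hne, hlt⟩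
  · rintro ⟨p', hp', hne, hlt⟩
    rcases mem_add.1 hp' with h | h
    · obtain ⟨q, hq, hpq⟩ := exists_NF_above htrans hanti h
      have hltq : lt p q := by
        rcases hpq with rfl | h' 
        · exact hlt
        · exact htrans _ _ _ hlt h'
      refine ⟨q, mem_add.2 (Or.inl hq), ?_, hltq⟩
      rintro rfl
      rcases hpq with rfl | h'
      · exact hne rfl
      · exact hne (hanti _ _ hlt h').symm
    · exact ⟨p', mem_add.2 (Or.inr h), hne, hlt⟩

lemma NF_add_left (u w : Multiset P) : NF lt (NF lt u + w) = NF lt (u + w) := by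
  ext p
  rw [count_NF, count_NF]
  by_cases ha : Absb lt (u + w) p
  · rw [if_pos ((Absb_NF_add htrans hanti).2 ha), if_pos ha]
  · rw [if_neg (fun h => ha ((Absb_NF_add htrans hanti).1 h)), if_neg ha]
    have hnabu : ¬ Absb lt u p := by
      rintro ⟨p', h1, h2, h3⟩
      exact ha ⟨p', mem_add.2 (Or.inl h1), h2, h3⟩
    by_cases hpp : lt p p
    · rw [if_pos hpp, if_pos hpp]
      have hmem : p ∈ NF lt u + w ↔ p ∈ u + w := by
        simp only [mem_add]
        constructor
        · rintro (h | h)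
          · exact Or.inl (mem_of_le (NF_le u) h)
          · exact Or.inr h
        · rintro (h | h)
          · exact Or.inl (mem_NF.2 ⟨h, hnabu⟩)
          · exact Or.inr h
      rw [if_congr hmem rfl rfl]
    · rw [if_neg hpp, if_neg hpp, count_add, count_add]
      congr 1
      rw [count_NF, if_neg hnabu, if_neg hpp]

end Chain

def conNF (lt : P → P → Prop) (htrans : ∀ a b c : P, lt a b → lt b c → lt a c)
    (hanti : ∀ a b : P, lt a b → lt b a → a = b) : AddCon (Multiset P) :=
  ⟨⟨fun u v => NF lt u = NF lt v, ⟨fun _ => rfl, Eq.symm, Eq.trans⟩⟩,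
   fun {a b c d} h1 h2 => by
    calc NF lt (a + c) = NF lt (NF lt a + c) := (NF_add_left htrans hanti a c).symm
    _ = NF lt (b + c) := by rw [h1, NF_add_left htrans hanti]
    _ = NF lt (NF lt c + b) := by rw [add_comm, NF_add_left htrans hanti]
    _ = NF lt (d + b) := by rw [h2, NF_add_left htrans hanti]
    _ = NF lt (b + d) := by rw [add_comm]⟩

section Key
include htrans hanti

omit htrans hanti in
lemma NF_singleton (p : P) : NF lt ({p} : Multiset P) = {p} := by
  ext q
  rw [count_NF]
  by_cases hq : q = p
  · subst hq
    have : ¬ Absb lt {q} q := by rintro ⟨p', h1, h2, h3⟩; simp_all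
    rw [if_neg this]
    split_ifs <;> simp_all
  · have : count q ({p} : Multiset P) = 0 := by simp [count_singleton, hq]
    rw [this]
    split_ifs <;> simp_all

lemma NF_pair {p q : P} (h : lt q p) : NF lt (({p} : Multiset P) + {q}) = {p} := by
  have hmem : ∀ r, r ∈ ({p} : Multiset P) + {q} ↔ r = p ∨ r = q := by
    intro r; simp [mem_add]
  ext r
  rw [count_NF]
  by_cases hrq : r = q
  · subst hrq
    by_cases hrp : r = p
    · subst hrp
      have hnab : ¬ Absb lt (({r} : Multiset P) + {r}) r := by
        rintro ⟨p', h1, h2, h3⟩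
        rcases (hmem p').1 h1 with rfl | rfl <;> exact h2 rfl
      rw [if_neg hnab, if_pos h, if_pos ((hmem r).2 (Or.inl rfl))]
      simp
    · have hab : Absb lt (({p} : Multiset P) + {r}) r :=
        ⟨p, (hmem p).2 (Or.inl rfl), fun e => hrp e.symm, h⟩
      rw [if_pos hab]
      simp [count_singleton, hrp]
  · by_cases hrp : r = p
    · subst hrp
      have hnab : ¬ Absb lt (({r} : Multiset P) + {q}) r := by
        rintro ⟨p', h1, h2, h3⟩
        rcases (hmem p').1 h1 with rfl | rfl
        · exact h2 rfl
        · exact hrq (hanti _ _ h3 h)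
      rw [if_neg hnab]
      split_ifs with h1 h2 <;> simp_all [count_add, count_singleton, hrq]
    · have h0 : count r (({p} : Multiset P) + {q}) = 0 := by
        simp [count_add, count_singleton, hrp, hrq]
      have h0' : count r ({p} : Multiset P) = 0 := by simp [count_singleton, hrp]
      rw [h0']
      split_ifs with h1 h2 h3
      · rfl
      · exact absurd ((hmem r).1 h3) (by simp [hrp, hrq])
      · rfl
      · exact h0

lemma key1 {u v : Multiset P} (h : addConGen (primRel P lt) u v) : NF lt u = NF lt v := by
  have hle : addConGen (primRel P lt) ≤ conNF lt htrans hanti := by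
    apply AddCon.addConGen_le.2
    rintro x y ⟨p, q, hlt, rfl, rfl⟩
    show NF lt _ = NF lt _
    rw [NF_singleton, NF_pair htrans hanti hlt]
  exact hle h

lemma absorb_con {s : Multiset P} : ∀ (r : Multiset P), (∀ q ∈ r, ∃ p ∈ s, lt q p) →
    addConGen (primRel P lt) (s + r) s := by
  intro r
  induction r using Multiset.induction with
  | empty => intro _; rw [add_zero]; exact (addConGen _).refl s
  | cons q r ih =>
    intro hr
    obtain ⟨p, hp, hlt⟩ := hr q (mem_cons_self q r)
    have hps : p ∈ s + r := mem_add.2 (Or.inl hp)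
    obtain ⟨t, ht⟩ := exists_cons_of_mem hps
    have h1 : addConGen (primRel P lt) (({p} : Multiset P) + {q} + t) (({p} : Multiset P) + t) :=
      AddCon.add _ ((addConGen _).symm (AddConGen.Rel.of _ _ ⟨p, q, hlt, rfl, rfl⟩))
        ((addConGen _).refl t)
    have e1 : s + (q ::ₘ r) = ({p} : Multiset P) + {q} + t := by
      rw [add_comm s, cons_add, add_comm r s, ht, cons_swap]
      simp [singleton_add, cons_add]
    have e2 : ({p} : Multiset P) + t = s + r := by rw [singleton_add, ht]
    rw [e1]
    exact (addConGen _).trans (e2 ▸ h1) (ih (fun q' hq' => hr q' (mem_cons_of_mem hq')))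

lemma NF_con (u : Multiset P) : addConGen (primRel P lt) u (NF lt u) := by
  have hle := NF_le (lt := lt) u
  have habs : ∀ q ∈ u - NF lt u, ∃ p ∈ NF lt u, lt q p := by
    intro q hq
    have hcount : count q (NF lt u) < count q u := by
      have := count_pos.2 hq
      rw [count_sub] at this
      omega
    have hqu : q ∈ u := by rw [← count_pos]; omega
    rw [count_NF] at hcount
    split_ifs at hcount with h1 h2
    · obtain ⟨p', hp', hne, hlt⟩ := h1
      obtain ⟨p'', hp'', hpq⟩ := exists_NF_above htrans hanti hp'
      refine ⟨p'', hp'', ?_⟩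
      rcases hpq with rfl | h'
      · exact hlt
      · exact htrans _ _ _ hlt h'
    · exact ⟨q, mem_NF.2 ⟨hqu, h1⟩, h2⟩
    · omega
  have := absorb_con htrans hanti (s := NF lt u) (u - NF lt u) habs
  rwa [add_tsub_cancel_of_le hle] at this

lemma key {u v : Multiset P} :
    (addConGen (primRel P lt)).mk' u = (addConGen (primRel P lt)).mk' v ↔ NF lt u = NF lt v := by
  rw [show ((addConGen (primRel P lt)).mk' u : (addConGen (primRel P lt)).Quotient) = (u : (addConGen (primRel P lt)).Quotient) from rfl,
    show ((addConGen (primRel P lt)).mk' v : (addConGen (primRel P lt)).Quotient) = (v : (addConGen (primRel P lt)).Quotient) from rfl, AddCon.eq]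
  constructor
  · exact key1 htrans hanti
  · intro h
    exact (addConGen _).trans (NF_con htrans hanti u)
      ((addConGen _).symm (h ▸ NF_con htrans hanti v))

lemma NF_idem (u : Multiset P) : NF lt (NF lt u) = NF lt u :=
  (key1 htrans hanti (NF_con htrans hanti u)).symm

lemma NF_add_NF (u v : Multiset P) : NF lt (NF lt u + NF lt v) = NF lt (u + v) :=
  calc NF lt (NF lt u + NF lt v) = NF lt (u + NF lt v) := NF_add_left htrans hanti u _
  _ = NF lt (NF lt v + u) := by rw [add_comm]
  _ = NF lt (v + u) := NF_add_left htrans hanti v u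
  _ = NF lt (u + v) := by rw [add_comm]

omit htrans hanti in
lemma NF_reg_le_one (s : Multiset P) (p : P) (hpp : lt p p) : count p (NF lt s) ≤ 1 := by
  rw [count_NF]
  split_ifs <;> omega

lemma absorb_mk {s t : Multiset P} (hle : s ≤ t) (habs : ∀ q ∈ t - s, ∃ p ∈ s, lt q p) :
    (addConGen (primRel P lt)).mk' t = (addConGen (primRel P lt)).mk' s := by
  have h1 := absorb_con htrans hanti (s := s) (t - s) habs
  rw [add_tsub_cancel_of_le hle] at h1
  exact (key htrans hanti).2 (key1 htrans hanti h1)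

lemma refine_lemma (x1 x2 x3 x4 : (addConGen (primRel P lt)).Quotient)
    (h : x1 + x2 = x3 + x4) :
    ∃ y1 y2 y3 y4, x1 = y1 + y2 ∧ x2 = y3 + y4 ∧ x3 = y1 + y3 ∧ x4 = y2 + y4 := by
  obtain ⟨u1, rfl⟩ := AddCon.mk'_surjective x1
  obtain ⟨u2, rfl⟩ := AddCon.mk'_surjective x2
  obtain ⟨u3, rfl⟩ := AddCon.mk'_surjective x3
  obtain ⟨u4, rfl⟩ := AddCon.mk'_surjective x4
  have hae : (addConGen (primRel P lt)).mk' (NF lt u1) = (addConGen (primRel P lt)).mk' u1 :=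
    (key htrans hanti).2 (NF_idem htrans hanti u1)
  have hbe : (addConGen (primRel P lt)).mk' (NF lt u2) = (addConGen (primRel P lt)).mk' u2 :=
    (key htrans hanti).2 (NF_idem htrans hanti u2)
  have hce : (addConGen (primRel P lt)).mk' (NF lt u3) = (addConGen (primRel P lt)).mk' u3 :=
    (key htrans hanti).2 (NF_idem htrans hanti u3)
  have hde : (addConGen (primRel P lt)).mk' (NF lt u4) = (addConGen (primRel P lt)).mk' u4 :=
    (key htrans hanti).2 (NF_idem htrans hanti u4)
  have hA1 : ∀ p, lt p p → count p (NF lt u1) ≤ 1 := fun p => NF_reg_le_one u1 p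
  have hB1 : ∀ p, lt p p → count p (NF lt u2) ≤ 1 := fun p => NF_reg_le_one u2 p
  have hC1 : ∀ p, lt p p → count p (NF lt u3) ≤ 1 := fun p => NF_reg_le_one u3 p
  have hD1 : ∀ p, lt p p → count p (NF lt u4) ≤ 1 := fun p => NF_reg_le_one u4 p
  set a := NF lt u1
  set b := NF lt u2
  set c := NF lt u3
  set d := NF lt u4
  have h12 : NF lt (u1 + u2) = NF lt (u3 + u4) := by
    have hm12 : (addConGen (primRel P lt)).mk' (u1 + u2)
        = (addConGen (primRel P lt)).mk' u1 + (addConGen (primRel P lt)).mk' u2 :=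
      map_add ((addConGen (primRel P lt)).mk') u1 u2
    have hm34 : (addConGen (primRel P lt)).mk' (u3 + u4)
        = (addConGen (primRel P lt)).mk' u3 + (addConGen (primRel P lt)).mk' u4 :=
      map_add ((addConGen (primRel P lt)).mk') u3 u4
    rw [← hm12, ← hm34] at h
    exact (key htrans hanti).1 h
  set n := NF lt (a + b) with hn
  have hncd : n = NF lt (c + d) := by
    rw [hn, NF_add_NF htrans hanti, h12, ← NF_add_NF htrans hanti]
  have hmem_ab : ∀ p ∈ n, p ∈ a + b := fun p hp => mem_of_le (NF_le _) (hn ▸ hp)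
  have hmem_cd : ∀ p ∈ n, p ∈ c + d := fun p hp => mem_of_le (NF_le _) (hncd ▸ hp)
  have hfreeq : ∀ p ∈ n, ¬ lt p p → count p a + count p b = count p c + count p d := by
    intro p hp hpp
    have e1 : count p n = count p (a + b) := by
      rw [hn, count_NF, if_neg (mem_NF.1 (hn ▸ hp)).2, if_neg hpp]
    have e2 : count p n = count p (c + d) := by
      rw [hncd, count_NF, if_neg (mem_NF.1 (hncd ▸ hp)).2, if_neg hpp]
    rw [count_add] at e1 e2
    omega
  have hchoice : ∀ q : P, q ∉ n → (q ∈ a + b ∨ q ∈ c + d) → ∃ p ∈ n, lt q p := by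
    intro q hq hm
    rcases hm with hm | hm
    · obtain ⟨p, hp, hpq⟩ := exists_NF_above htrans hanti hm
      rw [← hn] at hp
      rcases hpq with rfl | h'
      · exact absurd hp hq
      · exact ⟨p, hp, h'⟩
    · obtain ⟨p, hp, hpq⟩ := exists_NF_above htrans hanti hm
      rw [← hncd] at hp
      rcases hpq with rfl | h'
      · exact absurd hp hq
      · exact ⟨p, hp, h'⟩
  set H : P → P := fun q => if hq : ∃ p ∈ n, lt q p then hq.choose else q with hH
  have hHspec : ∀ q : P, (∃ p ∈ n, lt q p) → H q ∈ n ∧ lt q (H q) := by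
    intro q hq
    simp only [hH, dif_pos hq]
    exact ⟨hq.choose_spec.1, hq.choose_spec.2⟩
  set X := (a ∩ c).filter (fun p => p ∈ n)
      + (a.filter (fun q => q ∉ n)).filter (fun q => H q ∈ c)
      + (c.filter (fun q => q ∉ n)).filter (fun q => H q ∈ a) with hX
  set Y := ((a - c).filter (fun p => p ∈ n ∧ ¬ lt p p))
      + ((a ∩ d).filter (fun p => p ∈ n ∧ lt p p))
      + (a.filter (fun q => q ∉ n)).filter (fun q => H q ∉ c)
      + (d.filter (fun q => q ∉ n)).filter (fun q => H q ∈ a) with hY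
  set Z := ((c - a).filter (fun p => p ∈ n ∧ ¬ lt p p))
      + ((b ∩ c).filter (fun p => p ∈ n ∧ lt p p))
      + (b.filter (fun q => q ∉ n)).filter (fun q => H q ∈ c)
      + (c.filter (fun q => q ∉ n)).filter (fun q => H q ∉ a) with hZ
  set W := ((b - (c - a)).filter (fun p => p ∈ n ∧ ¬ lt p p))
      + ((b ∩ d).filter (fun p => p ∈ n ∧ lt p p))
      + (b.filter (fun q => q ∉ n)).filter (fun q => H q ∉ c)
      + (d.filter (fun q => q ∉ n)).filter (fun q => H q ∉ a) with hW
  have hcountX : ∀ p, count p X = (if p ∈ n then min (count p a) (count p c) else 0)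
      + (if p ∉ n ∧ H p ∈ c then count p a else 0)
      + (if p ∉ n ∧ H p ∈ a then count p c else 0) := by
    intro p
    rw [hX]
    simp only [count_add, count_filter, count_inter]
    by_cases hpn : p ∈ n <;> by_cases h1 : H p ∈ c <;> by_cases h2 : H p ∈ a <;>
      simp [hpn, h1, h2]
  have hcountY : ∀ p, count p Y
      = (if p ∈ n ∧ ¬ lt p p then count p a - count p c else 0)
      + (if p ∈ n ∧ lt p p then min (count p a) (count p d) else 0)
      + (if p ∉ n ∧ H p ∉ c then count p a else 0)
      + (if p ∉ n ∧ H p ∈ a then count p d else 0) := by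
    intro p
    rw [hY]
    simp only [count_add, count_filter, count_inter, count_sub]
    by_cases hpn : p ∈ n <;> by_cases hpp : lt p p <;> by_cases h1 : H p ∈ c <;>
      by_cases h2 : H p ∈ a <;> simp [hpn, hpp, h1, h2]
  have hcountZ : ∀ p, count p Z
      = (if p ∈ n ∧ ¬ lt p p then count p c - count p a else 0)
      + (if p ∈ n ∧ lt p p then min (count p b) (count p c) else 0)
      + (if p ∉ n ∧ H p ∈ c then count p b else 0)
      + (if p ∉ n ∧ H p ∉ a then count p c else 0) := by
    intro p
    rw [hZ]
    simp only [count_add, count_filter, count_inter, count_sub]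
    by_cases hpn : p ∈ n <;> by_cases hpp : lt p p <;> by_cases h1 : H p ∈ c <;>
      by_cases h2 : H p ∈ a <;> simp [hpn, hpp, h1, h2]
  have hcountW : ∀ p, count p W
      = (if p ∈ n ∧ ¬ lt p p then count p b - (count p c - count p a) else 0)
      + (if p ∈ n ∧ lt p p then min (count p b) (count p d) else 0)
      + (if p ∉ n ∧ H p ∉ c then count p b else 0)
      + (if p ∉ n ∧ H p ∉ a then count p d else 0) := by
    intro p
    rw [hW]
    simp only [count_add, count_filter, count_inter, count_sub]
    by_cases hpn : p ∈ n <;> by_cases hpp : lt p p <;> by_cases h1 : H p ∈ c <;>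
      by_cases h2 : H p ∈ a <;> simp [hpn, hpp, h1, h2]
  have hposab : ∀ p ∈ n, 0 < count p a + count p b := by
    intro p hp
    have := count_pos.2 (hmem_ab p hp)
    rwa [count_add] at this
  have hposcd : ∀ p ∈ n, 0 < count p c + count p d := by
    intro p hp
    have := count_pos.2 (hmem_cd p hp)
    rwa [count_add] at this
  -- row a
  have hle_a : a ≤ X + Y := by
    rw [le_iff_count]
    intro p
    rw [count_add, hcountX p, hcountY p]
    by_cases hpn : p ∈ n
    · by_cases hpp : lt p p
      · have h1 := hposcd p hpn
        have h1' := hposab p hpn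
        have h2 := hA1 p hpp
        have h3 := hB1 p hpp
        have h4 := hC1 p hpp
        have h5 := hD1 p hpp
        simp [hpn, hpp]
        omega
      · have h1 := hfreeq p hpn hpp
        simp [hpn, hpp]
        omega
    · by_cases hHc : H p ∈ c <;> by_cases hHa : H p ∈ a <;> simp [hpn, hHc, hHa] <;> omega
  have habs_a : ∀ q ∈ (X + Y) - a, ∃ p ∈ a, lt q p := by
    intro q hq
    have hcount : count q a < count q (X + Y) := by
      have h1 := count_pos.2 hq
      rw [count_sub] at h1
      omega
    rw [count_add, hcountX q, hcountY q] at hcount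
    by_cases hqn : q ∈ n
    · by_cases hqq : lt q q
      · refine ⟨q, ?_, hqq⟩
        rw [← count_pos]
        simp [hqn, hqq] at hcount
        omega
      · exfalso
        simp [hqn, hqq] at hcount
        omega
    · by_cases hHa : H q ∈ a
      · by_cases hHc : H q ∈ c
        all_goals {
          have hcd : q ∈ c + d := by
            rw [← count_pos, count_add]
            simp [hqn, hHa, hHc] at hcount
            omega
          obtain ⟨_, hlt⟩ := hHspec q (hchoice q hqn (Or.inr hcd))
          exact ⟨H q, hHa, hlt⟩ }
      · exfalso
        by_cases hHc : H q ∈ c <;> simp [hqn, hHa, hHc] at hcount <;> omega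
  -- row b
  have hle_b : b ≤ Z + W := by
    rw [le_iff_count]
    intro p
    rw [count_add, hcountZ p, hcountW p]
    by_cases hpn : p ∈ n
    · by_cases hpp : lt p p
      · have h1 := hposcd p hpn
        have h1' := hposab p hpn
        have h2 := hA1 p hpp
        have h3 := hB1 p hpp
        have h4 := hC1 p hpp
        have h5 := hD1 p hpp
        simp [hpn, hpp]
        omega
      · have h1 := hfreeq p hpn hpp
        simp [hpn, hpp]
        omega
    · by_cases hHc : H p ∈ c <;> by_cases hHa : H p ∈ a <;> simp [hpn, hHc, hHa] <;> omega
  have habs_b : ∀ q ∈ (Z + W) - b, ∃ p ∈ b, lt q p := by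
    intro q hq
    have hcount : count q b < count q (Z + W) := by
      have h1 := count_pos.2 hq
      rw [count_sub] at h1
      omega
    rw [count_add, hcountZ q, hcountW q] at hcount
    by_cases hqn : q ∈ n
    · by_cases hqq : lt q q
      · refine ⟨q, ?_, hqq⟩
        rw [← count_pos]
        simp [hqn, hqq] at hcount
        omega
      · exfalso
        have h1 := hfreeq q hqn hqq
        simp [hqn, hqq] at hcount
        omega
    · by_cases hHa : H q ∈ a
      · exfalso
        by_cases hHc : H q ∈ c <;> simp [hqn, hHa, hHc] at hcount <;> omega
      · by_cases hHc : H q ∈ c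
        all_goals {
          have hcd : q ∈ c + d := by
            rw [← count_pos, count_add]
            simp [hqn, hHa, hHc] at hcount
            omega
          obtain ⟨hHn, hlt⟩ := hHspec q (hchoice q hqn (Or.inr hcd))
          have hHb : H q ∈ b := by
            rcases mem_add.1 (hmem_ab _ hHn) with hh | hh
            · exact absurd hh hHa
            · exact hh
          exact ⟨H q, hHb, hlt⟩ }
  -- column c
  have hle_c : c ≤ X + Z := by
    rw [le_iff_count]
    intro p
    rw [count_add, hcountX p, hcountZ p]
    by_cases hpn : p ∈ n
    · by_cases hpp : lt p p
      · have h1 := hposcd p hpn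
        have h1' := hposab p hpn
        have h2 := hA1 p hpp
        have h3 := hB1 p hpp
        have h4 := hC1 p hpp
        have h5 := hD1 p hpp
        simp [hpn, hpp]
        omega
      · simp [hpn, hpp]
        omega
    · by_cases hHc : H p ∈ c <;> by_cases hHa : H p ∈ a <;> simp [hpn, hHc, hHa] <;> omega
  have habs_c : ∀ q ∈ (X + Z) - c, ∃ p ∈ c, lt q p := by
    intro q hq
    have hcount : count q c < count q (X + Z) := by
      have h1 := count_pos.2 hq
      rw [count_sub] at h1
      omega
    rw [count_add, hcountX q, hcountZ q] at hcount
    by_cases hqn : q ∈ n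
    · by_cases hqq : lt q q
      · refine ⟨q, ?_, hqq⟩
        rw [← count_pos]
        simp [hqn, hqq] at hcount
        omega
      · exfalso
        simp [hqn, hqq] at hcount
        omega
    · by_cases hHc : H q ∈ c
      · by_cases hHa : H q ∈ a
        all_goals {
          have hab : q ∈ a + b := by
            rw [← count_pos, count_add]
            simp [hqn, hHa, hHc] at hcount
            omega
          obtain ⟨_, hlt⟩ := hHspec q (hchoice q hqn (Or.inl hab))
          exact ⟨H q, hHc, hlt⟩ }
      · exfalso
        by_cases hHa : H q ∈ a <;> simp [hqn, hHa, hHc] at hcount <;> omega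
  -- column d
  have hle_d : d ≤ Y + W := by
    rw [le_iff_count]
    intro p
    rw [count_add, hcountY p, hcountW p]
    by_cases hpn : p ∈ n
    · by_cases hpp : lt p p
      · have h1 := hposcd p hpn
        have h1' := hposab p hpn
        have h2 := hA1 p hpp
        have h3 := hB1 p hpp
        have h4 := hC1 p hpp
        have h5 := hD1 p hpp
        simp [hpn, hpp]
        omega
      · have h1 := hfreeq p hpn hpp
        simp [hpn, hpp]
        omega
    · by_cases hHc : H p ∈ c <;> by_cases hHa : H p ∈ a <;> simp [hpn, hHc, hHa] <;> omega
  have habs_d : ∀ q ∈ (Y + W) - d, ∃ p ∈ d, lt q p := by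
    intro q hq
    have hcount : count q d < count q (Y + W) := by
      have h1 := count_pos.2 hq
      rw [count_sub] at h1
      omega
    rw [count_add, hcountY q, hcountW q] at hcount
    by_cases hqn : q ∈ n
    · by_cases hqq : lt q q
      · refine ⟨q, ?_, hqq⟩
        rw [← count_pos]
        simp [hqn, hqq] at hcount
        omega
      · exfalso
        have h1 := hfreeq q hqn hqq
        simp [hqn, hqq] at hcount
        omega
    · by_cases hHc : H q ∈ c
      · exfalso
        by_cases hHa : H q ∈ a <;> simp [hqn, hHa, hHc] at hcount <;> omega
      · by_cases hHa : H q ∈ a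
        all_goals {
          have hab : q ∈ a + b := by
            rw [← count_pos, count_add]
            simp [hqn, hHa, hHc] at hcount
            omega
          obtain ⟨hHn, hlt⟩ := hHspec q (hchoice q hqn (Or.inl hab))
          have hHd : H q ∈ d := by
            rcases mem_add.1 (hmem_cd _ hHn) with hh | hh
            · exact absurd hh hHc
            · exact hh
          exact ⟨H q, hHd, hlt⟩ }
  have e1 := absorb_mk htrans hanti hle_a habs_a
  have e2 := absorb_mk htrans hanti hle_b habs_b
  have e3 := absorb_mk htrans hanti hle_c habs_c
  have e4 := absorb_mk htrans hanti hle_d habs_d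
  refine ⟨(addConGen (primRel P lt)).mk' X, (addConGen (primRel P lt)).mk' Y,
    (addConGen (primRel P lt)).mk' Z, (addConGen (primRel P lt)).mk' W, ?_, ?_, ?_, ?_⟩
  · rw [← hae, ← e1]
    exact map_add ((addConGen (primRel P lt)).mk') X Y
  · rw [← hbe, ← e2]
    exact map_add ((addConGen (primRel P lt)).mk') Z W
  · rw [← hce, ← e3]
    exact map_add ((addConGen (primRel P lt)).mk') X Z
  · rw [← hde, ← e4]
    exact map_add ((addConGen (primRel P lt)).mk') Y W

omit htrans hanti in
lemma NF_zero : NF lt (0 : Multiset P) = 0 := le_zero.1 (NF_le 0)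

lemma NF_eq_zero {s : Multiset P} (h : NF lt s = 0) : s = 0 := by
  by_contra hs
  obtain ⟨q, hq⟩ := exists_mem_of_ne_zero hs
  obtain ⟨p, hp, -⟩ := exists_NF_above htrans hanti hq
  rw [h] at hp
  exact notMem_zero p hp

omit htrans hanti in
lemma mk_add (u v : Multiset P) : (addConGen (primRel P lt)).mk' (u + v)
    = (addConGen (primRel P lt)).mk' u + (addConGen (primRel P lt)).mk' v :=
  map_add ((addConGen (primRel P lt)).mk') u v

omit htrans hanti in
lemma mk_zero : (addConGen (primRel P lt)).mk' 0 = 0 :=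
  map_zero ((addConGen (primRel P lt)).mk')

lemma conical_lemma : IsConical ((addConGen (primRel P lt)).Quotient) := by
  intro x y hxy
  obtain ⟨u, rfl⟩ := AddCon.mk'_surjective x
  obtain ⟨v, rfl⟩ := AddCon.mk'_surjective y
  have h0 : (addConGen (primRel P lt)).mk' (u + v) = (addConGen (primRel P lt)).mk' 0 := by
    rw [mk_add, hxy, mk_zero]
  have h1 : NF lt (u + v) = NF lt 0 := (key htrans hanti).1 h0
  rw [NF_zero] at h1
  have huv : u + v = 0 := NF_eq_zero htrans hanti h1
  have hu : u = 0 ∧ v = 0 := by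
    constructor <;> [exact le_zero.1 (huv ▸ le_add_right u v);
      exact le_zero.1 (huv ▸ le_add_left v u)]
  constructor
  · rw [hu.1, mk_zero]
  · rw [hu.2, mk_zero]

lemma antisym_lemma : IsAntisymmetric ((addConGen (primRel P lt)).Quotient) := by
  intro x y hxy hyx
  obtain ⟨u, rfl⟩ := AddCon.mk'_surjective x
  obtain ⟨v, rfl⟩ := AddCon.mk'_surjective y
  obtain ⟨z, hz⟩ := hxy
  obtain ⟨t, rfl⟩ := AddCon.mk'_surjective z
  obtain ⟨w, hw⟩ := hyx
  obtain ⟨sw, rfl⟩ := AddCon.mk'_surjective w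
  have h1 : NF lt v = NF lt (u + t) := (key htrans hanti).1 (by rw [mk_add, ← hz])
  have h2 : NF lt u = NF lt (v + sw) := (key htrans hanti).1 (by rw [mk_add, ← hw])
  have hAB : ∀ p ∈ NF lt u, ∃ q ∈ NF lt v, p = q ∨ lt p q := by
    intro p hp
    have hpu : p ∈ u + t := mem_add.2 (Or.inl (mem_of_le (NF_le u) hp))
    obtain ⟨q, hq, hpq⟩ := exists_NF_above htrans hanti hpu
    rw [← h1] at hq
    exact ⟨q, hq, hpq⟩
  have hBA : ∀ p ∈ NF lt v, ∃ q ∈ NF lt u, p = q ∨ lt p q := by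
    intro p hp
    have hpv : p ∈ v + sw := mem_add.2 (Or.inl (mem_of_le (NF_le v) hp))
    obtain ⟨q, hq, hpq⟩ := exists_NF_above htrans hanti hpv
    rw [← h2] at hq
    exact ⟨q, hq, hpq⟩
  have hmax : ∀ (s : Multiset P), ∀ p ∈ NF lt s, ∀ r ∈ NF lt s, lt p r → p = r := by
    intro s p hp r hr hlt
    by_contra hne
    exact (mem_NF.1 hp).2 ⟨r, mem_of_le (NF_le s) hr, fun e => hne e.symm, hlt⟩
  have hsubAB : ∀ p ∈ NF lt u, p ∈ NF lt v := by
    intro p hp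
    obtain ⟨q, hq, hpq⟩ := hAB p hp
    obtain ⟨r, hr, hqr⟩ := hBA q hq
    have hpr : p = r := by
      rcases hpq with rfl | hl1
      · rcases hqr with rfl | hl2
        · rfl
        · exact hmax u p hp r hr hl2
      · rcases hqr with rfl | hl2
        · exact hmax u p hp _ hr hl1
        · exact hmax u p hp r hr (htrans _ _ _ hl1 hl2)
    have hpq' : p = q := by
      rcases hpq with rfl | hl1
      · rfl
      · rcases hqr with he | hl2
        · exact (hpr ▸ he.symm)
        · exact hanti _ _ hl1 (hpr ▸ hl2)
    rwa [hpq']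
  have hsubBA : ∀ p ∈ NF lt v, p ∈ NF lt u := by
    intro p hp
    obtain ⟨q, hq, hpq⟩ := hBA p hp
    obtain ⟨r, hr, hqr⟩ := hAB q hq
    have hpr : p = r := by
      rcases hpq with rfl | hl1
      · rcases hqr with rfl | hl2
        · rfl
        · exact hmax v p hp r hr hl2
      · rcases hqr with rfl | hl2
        · exact hmax v p hp _ hr hl1
        · exact hmax v p hp r hr (htrans _ _ _ hl1 hl2)
    have hpq' : p = q := by
      rcases hpq with rfl | hl1
      · rfl
      · rcases hqr with he | hl2
        · exact (hpr ▸ he.symm)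
        · exact hanti _ _ hl1 (hpr ▸ hl2)
    rwa [hpq']
  have hNFeq : NF lt u = NF lt v := by
    ext p
    by_cases hpA : p ∈ NF lt u
    · have hpB := hsubAB p hpA
      by_cases hpp : lt p p
      · have c1 : count p (NF lt u) = 1 := by
          rw [count_NF, if_neg (mem_NF.1 hpA).2, if_pos hpp,
            if_pos (mem_of_le (NF_le u) hpA)]
        have c2 : count p (NF lt v) = 1 := by
          rw [count_NF, if_neg (mem_NF.1 hpB).2, if_pos hpp,
            if_pos (mem_of_le (NF_le v) hpB)]
        rw [c1, c2]
      · have c1 : count p (NF lt u) = count p u := by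
          rw [count_NF, if_neg (mem_NF.1 hpA).2, if_neg hpp]
        have c2 : count p (NF lt v) = count p v := by
          rw [count_NF, if_neg (mem_NF.1 hpB).2, if_neg hpp]
        have c3 : count p (NF lt v) = count p u + count p t := by
          rw [h1, count_NF, if_neg (mem_NF.1 (h1 ▸ hpB)).2, if_neg hpp, count_add]
        have c4 : count p (NF lt u) = count p v + count p sw := by
          rw [h2, count_NF, if_neg (mem_NF.1 (h2 ▸ hpA)).2, if_neg hpp, count_add]
        omega
    · have hpB : p ∉ NF lt v := fun h => hpA (hsubBA p h)
      rw [count_eq_zero_of_notMem hpA, count_eq_zero_of_notMem hpB]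
  exact (key htrans hanti).2 hNFeq

lemma le_single_iff {p : P} {s : Multiset P} :
    AlgLE ((addConGen (primRel P lt)).mk' {p}) ((addConGen (primRel P lt)).mk' s) ↔
    ∃ p' ∈ s, p = p' ∨ lt p p' := by
  constructor
  · rintro ⟨z, hz⟩
    obtain ⟨t, rfl⟩ := AddCon.mk'_surjective z
    rw [← mk_add] at hz
    have hNF : NF lt s = NF lt ({p} + t) := (key htrans hanti).1 hz
    have hpmem : p ∈ ({p} : Multiset P) + t := mem_add.2 (Or.inl (mem_singleton_self p))
    obtain ⟨q, hq, hpq⟩ := exists_NF_above htrans hanti hpmem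
    rw [← hNF] at hq
    exact ⟨q, mem_of_le (NF_le s) hq, hpq⟩
  · rintro ⟨p', hp', hpq | hpq⟩
    · subst hpq
      refine ⟨(addConGen (primRel P lt)).mk' (s.erase p), ?_⟩
      rw [← mk_add]
      congr 1
      rw [singleton_add, cons_erase hp']
    · refine ⟨(addConGen (primRel P lt)).mk' s, ?_⟩
      rw [← mk_add]
      have hle : s ≤ {p} + s := le_add_left s {p}
      have habs : ∀ q ∈ ({p} + s) - s, ∃ p'' ∈ s, lt q p'' := by
        intro q hq
        rw [add_tsub_cancel_right] at hq
        rw [mem_singleton.1 hq]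
        exact ⟨p', hp', hpq⟩
      exact (absorb_mk htrans hanti hle habs).symm

lemma single_prime (p : P) : IsPrimeElem ((addConGen (primRel P lt)).mk' ({p} : Multiset P)) := by
  constructor
  · intro h0
    have h1 : NF lt ({p} : Multiset P) = NF lt 0 :=
      (key htrans hanti).1 (by rw [h0, mk_zero])
    rw [NF_singleton, NF_zero] at h1
    exact singleton_ne_zero p h1
  · intro x y hxy
    obtain ⟨u, rfl⟩ := AddCon.mk'_surjective x
    obtain ⟨v, rfl⟩ := AddCon.mk'_surjective y
    have h2 : AlgLE ((addConGen (primRel P lt)).mk' {p}) ((addConGen (primRel P lt)).mk' (u + v)) := by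
      rwa [mk_add]
    rw [le_single_iff htrans hanti] at h2
    obtain ⟨p', hp', hpq⟩ := h2
    rcases mem_add.1 hp' with h | h
    · exact Or.inl ((le_single_iff htrans hanti).2 ⟨p', h, hpq⟩)
    · exact Or.inr ((le_single_iff htrans hanti).2 ⟨p', h, hpq⟩)

omit htrans hanti in
lemma mk_eq_sum (s : Multiset P) : (addConGen (primRel P lt)).mk' s
    = (s.map (fun p => (addConGen (primRel P lt)).mk' {p})).sum := by
  induction s using Multiset.induction with
  | empty => simp [mk_zero]
  | cons q t ih =>
    rw [map_cons, sum_cons, ← ih, ← singleton_add, mk_add]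

lemma prime_le_mem {x : (addConGen (primRel P lt)).Quotient} (hx : IsPrimeElem x) :
    ∀ (s : Multiset P), AlgLE x ((addConGen (primRel P lt)).mk' s) →
    ∃ q ∈ s, AlgLE x ((addConGen (primRel P lt)).mk' {q}) := by
  intro s
  induction s using Multiset.induction with
  | empty =>
    rintro ⟨z, hz⟩
    rw [mk_zero] at hz
    exact absurd (conical_lemma htrans hanti x z hz.symm).1 hx.1
  | cons q t ih =>
    intro h
    rw [← singleton_add, mk_add] at h
    rcases hx.2 _ _ h with h1 | h1
    · exact ⟨q, mem_cons_self q t, h1⟩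
    · obtain ⟨r, hr, h2⟩ := ih h1
      exact ⟨r, mem_cons_of_mem hr, h2⟩

end Key
end Prim7
/-- For a transitive antisymmetric relation `◁` on a set `P`, the monoid `M(P, ◁)`
is a primitive (conical, antisymmetric, primely generated refinement) monoid, the
canonical map `P → M(P, ◁)` is injective, the primes of `M(P, ◁)` are exactly the
classes of elements of `P`, and `[p] + [q] = [p]` iff `q ◁ p`. -/
theorem statement7 (P : Type) (lt : P → P → Prop)
    (htrans : ∀ a b c : P, lt a b → lt b c → lt a c)
    (hanti : ∀ a b : P, lt a b → lt b a → a = b) :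
    IsConical (PrimMonoid P lt) ∧
    IsAntisymmetric (PrimMonoid P lt) ∧
    PrimelyGenerated (PrimMonoid P lt) ∧
    IsRefinement (PrimMonoid P lt) ∧
    Function.Injective (fun p : P => (addConGen (primRel P lt)).mk' ({p} : Multiset P)) ∧
    (∀ x : PrimMonoid P lt, IsPrimeElem x ↔
      ∃ p : P, x = (addConGen (primRel P lt)).mk' ({p} : Multiset P)) ∧
    (∀ p q : P,
      (addConGen (primRel P lt)).mk' ({p} : Multiset P) +
        (addConGen (primRel P lt)).mk' ({q} : Multiset P) =
        (addConGen (primRel P lt)).mk' ({p} : Multiset P) ↔ lt q p) := by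
  classical
  refine ⟨Prim7.conical_lemma htrans hanti, Prim7.antisym_lemma htrans hanti, ?_, ?_, ?_, ?_, ?_⟩
  · intro x
    obtain ⟨s, rfl⟩ := AddCon.mk'_surjective x
    refine ⟨s.map (fun p => (addConGen (primRel P lt)).mk' {p}), ?_, Prim7.mk_eq_sum s⟩
    intro q hq
    obtain ⟨p, hp, rfl⟩ := Multiset.mem_map.1 hq
    exact Prim7.single_prime htrans hanti p
  · exact fun a b c d h => Prim7.refine_lemma htrans hanti a b c d h
  · intro p q h
    have h2 := (Prim7.key htrans hanti).1 h
    rw [Prim7.NF_singleton, Prim7.NF_singleton] at h2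
    exact Multiset.singleton_inj.1 h2
  · intro x
    constructor
    · intro hx
      obtain ⟨s, rfl⟩ := AddCon.mk'_surjective x
      obtain ⟨q, hq, hle⟩ := Prim7.prime_le_mem htrans hanti hx s ⟨0, (add_zero _).symm⟩
      have hge := (Prim7.le_single_iff htrans hanti).2 ⟨q, hq, Or.inl rfl⟩
      exact ⟨q, Prim7.antisym_lemma htrans hanti _ _ hle hge⟩
    · rintro ⟨p, rfl⟩
      exact Prim7.single_prime htrans hanti p
  · intro p q
    constructor
    · intro h
      have h' : (addConGen (primRel P lt)).mk' (({p} : Multiset P) + {q})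
          = (addConGen (primRel P lt)).mk' {p} := by rw [Prim7.mk_add]; exact h
      have hNF := (Prim7.key htrans hanti).1 h'
      rw [Prim7.NF_singleton] at hNF
      by_cases hpq : p = q
      · subst hpq
        by_contra hpp
        have hc := congrArg (Multiset.count p) hNF
        rw [Prim7.count_NF] at hc
        have hnab : ¬ Prim7.Absb lt (({p} : Multiset P) + {p}) p := by
          rintro ⟨p', h1, h2, h3⟩
          simp only [Multiset.mem_add, Multiset.mem_singleton] at h1
          rcases h1 with rfl | rfl <;> exact h2 rfl
        rw [if_neg hnab, if_neg hpp] at hc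
        simp [Multiset.count_add, Multiset.count_singleton] at hc
      · have hc := congrArg (Multiset.count q) hNF
        rw [Prim7.count_NF] at hc
        by_cases hab : Prim7.Absb lt (({p} : Multiset P) + {q}) q
        · obtain ⟨p', h1, h2, h3⟩ := hab
          simp only [Multiset.mem_add, Multiset.mem_singleton] at h1
          rcases h1 with rfl | rfl
          · exact h3
          · exact absurd rfl h2
        · exfalso
          have hqp : q ≠ p := fun e => hpq e.symm
          have hmemq : q ∈ ({p} : Multiset P) + {q} :=
            Multiset.mem_add.2 (Or.inr (Multiset.mem_singleton_self q))
          rw [if_neg hab] at hc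
          split_ifs at hc with h1
          · simp [Multiset.count_singleton, hqp] at hc
          · simp [Multiset.count_add, Multiset.count_singleton, hqp] at hc
    · intro h
      rw [← Prim7.mk_add]
      exact (Prim7.key htrans hanti).2
        (by rw [Prim7.NF_pair htrans hanti h, Prim7.NF_singleton])
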